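/- Let Σ = (X, 𝒰, φ) be a control system monotone with respect to states and inputs. Assume (i) there exists ρ ∈ K∞ such that x₋ ≤ x ≤ x₊ implies ‖x‖_X ≤ ρ(‖x₋‖_X + ‖x₊‖_X); (ii) there exist η, ξ ∈ K∞ such that for every x ∈ X, u ∈ 𝒰(x), and ε > 0 there exist x₋, x₊ ∈ X and u₋ ∈ 𝒰(x₋) ∩ 𝒰_c, u₊ ∈ 𝒰(x₊) ∩ 𝒰_c with x₋ ≤ x ≤ x₊, u₋ ≤ u ≤ u₊, max(‖u₋‖, ‖u₊‖) ≤ η(‖u‖ + ε), and max(‖x₋‖, ‖x₊‖) ≤ ξ(‖x‖ + ‖u‖ + ε). Then Σ is ISS if and only if Σ is ISS with respect to inputs in 𝒰_c. -/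

import Mathlib

/-- Class `K`: continuous, strictly increasing, zero at zero. -/
def ClassK (γ : NNReal → NNReal) : Prop :=
  Continuous γ ∧ StrictMono γ ∧ γ 0 = 0

/-- Class `K∞`: class `K` and unbounded. -/
def ClassKInf (γ : NNReal → NNReal) : Prop :=
  ClassK γ ∧ ∀ M : NNReal, ∃ r : NNReal, M < γ r

/-- Class `KL`. -/
def ClassKL (β : NNReal → NNReal → NNReal) : Prop :=
  (∀ t : NNReal, ClassK (fun r => β r t)) ∧
    ∀ r : NNReal, 0 < r →
      Antitone (fun t => β r t) ∧
        Filter.Tendsto (fun t => β r t) Filter.atTop (nhds 0)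

/-- ISS w.r.t. the class of inputs `S`, for a system with admissible input sets `adm x`. -/
def ISSAdmOn {X U : Type*} [NormedAddCommGroup X] [NormedAddCommGroup U]
    (φ : NNReal → X → U → X) (adm : X → Set U) (S : Set U) : Prop :=
  ∃ β γ, ClassKL β ∧ ClassK γ ∧
    ∀ (x : X), ∀ u ∈ adm x ∩ S, ∀ t : NNReal, ‖φ t x u‖₊ ≤ β ‖x‖₊ t + γ ‖u‖₊

/-- Weak superadditivity bound for class `K` functions. -/
lemma ClassK.split {f : NNReal → NNReal} (hf : ClassK f) (a b : NNReal) :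
    f (a + b) ≤ f (2 * a) + f (2 * b) := by
  rcases le_total a b with h | h
  · calc f (a + b) ≤ f (2 * b) := hf.2.1.monotone (by rw [two_mul]; exact add_le_add_left h b)
    _ ≤ f (2 * a) + f (2 * b) := le_add_self
  · calc f (a + b) ≤ f (2 * a) := hf.2.1.monotone (by rw [two_mul]; exact add_le_add_right h a)
    _ ≤ f (2 * a) + f (2 * b) := le_self_add

lemma ClassK.comp {f g : NNReal → NNReal} (hf : ClassK f) (hg : ClassK g) :
    ClassK (fun r => f (g r)) :=
  ⟨hf.1.comp hg.1, hf.2.1.comp hg.2.1, by simp only []; rw [hg.2.2, hf.2.2]⟩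

lemma ClassK.add {f g : NNReal → NNReal} (hf : ClassK f) (hg : ClassK g) :
    ClassK (fun r => f r + g r) :=
  ⟨hf.1.add hg.1, hf.2.1.add hg.2.1, by simp only []; rw [hf.2.2, hg.2.2, add_zero]⟩

lemma classK_const_mul (c : NNReal) (hc : 0 < c) : ClassK (fun r => c * r) :=
  ⟨continuous_const.mul continuous_id,
    fun _ _ h => mul_lt_mul_of_pos_left h hc, mul_zero c⟩

/-- A control system monotone w.r.t. both states and inputs is ISS iff it is ISS with
respect to a subclass of inputs `Uc` satisfying the sandwich conditions. -/
theorem stmt_6 {X U : Type*} [NormedAddCommGroup X] [Preorder X]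
    [NormedAddCommGroup U] [Preorder U]
    (φ : NNReal → X → U → X) (adm : X → Set U) (Uc : Set U)
    (hmono : ∀ (t : NNReal) (x₁ x₂ : X) (u₁ u₂ : U), u₁ ∈ adm x₁ → u₂ ∈ adm x₂ →
      x₁ ≤ x₂ → u₁ ≤ u₂ → φ t x₁ u₁ ≤ φ t x₂ u₂)
    (ρ : NNReal → NNReal) (hρ : ClassKInf ρ)
    (hsandwich : ∀ xm x xp : X, xm ≤ x → x ≤ xp → ‖x‖₊ ≤ ρ (‖xm‖₊ + ‖xp‖₊))
    (η ξ : NNReal → NNReal) (hη : ClassKInf η) (hξ : ClassKInf ξ)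
    (happrox : ∀ (x : X), ∀ u ∈ adm x, ∀ ε : NNReal, 0 < ε →
      ∃ (xm xp : X) (um up : U), um ∈ adm xm ∩ Uc ∧ up ∈ adm xp ∩ Uc ∧
        xm ≤ x ∧ x ≤ xp ∧ um ≤ u ∧ u ≤ up ∧
        max ‖um‖₊ ‖up‖₊ ≤ η (‖u‖₊ + ε) ∧
        max ‖xm‖₊ ‖xp‖₊ ≤ ξ (‖x‖₊ + ‖u‖₊ + ε)) :
    ISSAdmOn φ adm (Set.univ : Set U) ↔ ISSAdmOn φ adm Uc := by
  constructor
  · rintro ⟨β, γ, hβ, hγ, hest⟩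
    exact ⟨β, γ, hβ, hγ, fun x u hu t =>
      hest x u ⟨hu.1, Set.mem_univ u⟩ t⟩
  · rintro ⟨β, γ, hβ, hγ, hest⟩
    have hρK : ClassK ρ := hρ.1
    have hξK : ClassK ξ := hξ.1
    have hηK : ClassK η := hη.1
    -- new comparison functions
    set β' : NNReal → NNReal → NNReal := fun r t => ρ (4 * β (2 * ξ (2 * r)) t) with hβ'def
    set γ' : NNReal → NNReal := fun s =>
      ρ (8 * β (2 * ξ (2 * s)) 0) + ρ (8 * γ (η s)) with hγ'def
    -- β' is class KL
    have hβ'K : ∀ t, ClassK (fun r => β' r t) := by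
      intro t
      exact ((hρK.comp (classK_const_mul 4 (by norm_num))).comp
        ((hβ.1 t).comp (classK_const_mul 2 (by norm_num)))).comp
        (hξK.comp (classK_const_mul 2 (by norm_num)))
    have hβ'KL : ClassKL β' := by
      refine ⟨hβ'K, fun r hr => ?_⟩
      have hpos : 0 < 2 * ξ (2 * r) := by
        have : ξ 0 < ξ (2 * r) := hξK.2.1 (by positivity)
        rw [hξK.2.2] at this
        positivity
      obtain ⟨hanti, htend⟩ := hβ.2 _ hpos
      constructor
      · intro t₁ t₂ h
        exact hρK.2.1.monotone (mul_le_mul_right (hanti h) 4)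
      · have hcont : Continuous (fun a : NNReal => ρ (4 * a)) :=
          hρK.1.comp (continuous_const.mul continuous_id)
        have := (hcont.tendsto 0).comp htend
        simpa [mul_zero, hρK.2.2, hβ'def, Function.comp_def] using this
    -- γ' is class K
    have hγ'K : ClassK γ' := by
      refine ClassK.add ?_ ?_
      · exact ((hρK.comp (classK_const_mul 8 (by norm_num))).comp
          ((hβ.1 0).comp (classK_const_mul 2 (by norm_num)))).comp
          (hξK.comp (classK_const_mul 2 (by norm_num)))
      · exact ((hρK.comp (classK_const_mul 8 (by norm_num))).comp hγ).comp hηK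
    refine ⟨β', γ', hβ'KL, hγ'K, ?_⟩
    rintro x u ⟨hu, -⟩ t
    set r := ‖x‖₊
    set s := ‖u‖₊
    -- Step 1: estimate with ε
    have step1 : ∀ ε : NNReal, 0 < ε →
        ‖φ t x u‖₊ ≤ ρ (2 * β (ξ (r + s + ε)) t + 2 * γ (η (s + ε))) := by
      intro ε hε
      obtain ⟨xm, xp, um, up, hum, hup, hxm, hxp, huml, hupl, hubd, hxbd⟩ :=
        happrox x u hu ε hε
      have h1 : φ t xm um ≤ φ t x u := hmono t xm x um u hum.1 hu hxm huml
      have h2 : φ t x u ≤ φ t xp up := hmono t x xp u up hu hup.1 hxp hupl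
      have hsand := hsandwich (φ t xm um) (φ t x u) (φ t xp up) h1 h2
      refine hsand.trans (hρK.2.1.monotone ?_)
      have em : ‖φ t xm um‖₊ ≤ β (ξ (r + s + ε)) t + γ (η (s + ε)) := by
        refine (hest xm um hum t).trans (add_le_add ?_ ?_)
        · exact (hβ.1 t).2.1.monotone ((le_max_left _ _).trans hxbd)
        · exact hγ.2.1.monotone ((le_max_left _ _).trans hubd)
      have ep : ‖φ t xp up‖₊ ≤ β (ξ (r + s + ε)) t + γ (η (s + ε)) := by
        refine (hest xp up hup t).trans (add_le_add ?_ ?_)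
        · exact (hβ.1 t).2.1.monotone ((le_max_right _ _).trans hxbd)
        · exact hγ.2.1.monotone ((le_max_right _ _).trans hubd)
      calc ‖φ t xm um‖₊ + ‖φ t xp up‖₊
          ≤ (β (ξ (r + s + ε)) t + γ (η (s + ε))) + (β (ξ (r + s + ε)) t + γ (η (s + ε))) :=
            add_le_add em ep
        _ = 2 * β (ξ (r + s + ε)) t + 2 * γ (η (s + ε)) := by ring
    -- Step 2: take ε → 0
    have step2 : ‖φ t x u‖₊ ≤ ρ (2 * β (ξ (r + s)) t + 2 * γ (η s)) := by
      set f : NNReal → NNReal :=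
        fun ε => ρ (2 * β (ξ (r + s + ε)) t + 2 * γ (η (s + ε))) with hfdef
      have hfc : Continuous f := by
        apply hρK.1.comp
        apply Continuous.add
        · exact (continuous_const.mul ((hβ.1 t).1.comp
            (hξK.1.comp (continuous_const.add continuous_id))))
        · exact (continuous_const.mul (hγ.1.comp
            (hηK.1.comp (continuous_const.add continuous_id))))
      have htends : Filter.Tendsto f (nhdsWithin 0 (Set.Ioi 0)) (nhds (f 0)) :=
        (hfc.tendsto 0).mono_left nhdsWithin_le_nhds
      have h0 : f 0 = ρ (2 * β (ξ (r + s)) t + 2 * γ (η s)) := by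
        simp [hfdef]
      rw [← h0]
      refine ge_of_tendsto htends ?_
      filter_upwards [self_mem_nhdsWithin] with ε hε
      exact step1 ε hε
    -- Step 3: split into separate x and u contributions
    refine step2.trans ?_
    have hsplit1 : ξ (r + s) ≤ ξ (2 * r) + ξ (2 * s) := hξK.split r s
    have hsplit2 : β (ξ (2 * r) + ξ (2 * s)) t ≤
        β (2 * ξ (2 * r)) t + β (2 * ξ (2 * s)) t := (hβ.1 t).split _ _
    have hchain : 2 * β (ξ (r + s)) t + 2 * γ (η s) ≤
        (2 * β (2 * ξ (2 * r)) t) + (2 * β (2 * ξ (2 * s)) t + 2 * γ (η s)) := by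
      have : β (ξ (r + s)) t ≤ β (2 * ξ (2 * r)) t + β (2 * ξ (2 * s)) t :=
        ((hβ.1 t).2.1.monotone hsplit1).trans hsplit2
      calc 2 * β (ξ (r + s)) t + 2 * γ (η s)
          ≤ 2 * (β (2 * ξ (2 * r)) t + β (2 * ξ (2 * s)) t) + 2 * γ (η s) :=
            add_le_add_left (mul_le_mul_right this 2) _
        _ = (2 * β (2 * ξ (2 * r)) t) + (2 * β (2 * ξ (2 * s)) t + 2 * γ (η s)) := by ring
    refine (hρK.2.1.monotone hchain).trans ?_
    have hA := hρK.split (2 * β (2 * ξ (2 * r)) t) (2 * β (2 * ξ (2 * s)) t + 2 * γ (η s))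
    have hB : ρ (2 * (2 * β (2 * ξ (2 * s)) t + 2 * γ (η s))) ≤
        ρ (8 * β (2 * ξ (2 * s)) t) + ρ (8 * γ (η s)) := by
      have := hρK.split (4 * β (2 * ξ (2 * s)) t) (4 * γ (η s))
      calc ρ (2 * (2 * β (2 * ξ (2 * s)) t + 2 * γ (η s)))
          = ρ (4 * β (2 * ξ (2 * s)) t + 4 * γ (η s)) := by ring_nf
        _ ≤ ρ (2 * (4 * β (2 * ξ (2 * s)) t)) + ρ (2 * (4 * γ (η s))) := this
        _ = ρ (8 * β (2 * ξ (2 * s)) t) + ρ (8 * γ (η s)) := by ring_nf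
    have hβ0 : β (2 * ξ (2 * s)) t ≤ β (2 * ξ (2 * s)) 0 := by
      rcases eq_or_lt_of_le (zero_le : 0 ≤ 2 * ξ (2 * s)) with h | h
      · rw [← h]
        have h1 : β 0 t = 0 := (hβ.1 t).2.2
        have h2 : β 0 0 = 0 := (hβ.1 0).2.2
        rw [h1, h2]
      · exact (hβ.2 _ h).1 (zero_le : (0 : NNReal) ≤ t)
    calc ρ (2 * β (2 * ξ (2 * r)) t + (2 * β (2 * ξ (2 * s)) t + 2 * γ (η s)))
        ≤ ρ (2 * (2 * β (2 * ξ (2 * r)) t)) +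
          ρ (2 * (2 * β (2 * ξ (2 * s)) t + 2 * γ (η s))) := hA
      _ ≤ ρ (4 * β (2 * ξ (2 * r)) t) + (ρ (8 * β (2 * ξ (2 * s)) t) + ρ (8 * γ (η s))) := by
          refine add_le_add ?_ hB
          apply le_of_eq
          ring_nf
      _ ≤ β' r t + γ' s := by
          refine add_le_add le_rfl (add_le_add ?_ le_rfl)
          exact hρK.2.1.monotone (mul_le_mul_right hβ0 8)
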